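/- Let T > 0, Y₀ > 0, ρ ∈ (−1, 1), X₀ ∈ ℝ, and let B be a normal random variable with mean 0 and variance T. Then E[ C( X₀ + ρ Y₀ B − (ρ²/2) Y₀² T, (1 − ρ²) Y₀² T ) ] = C(X₀, Y₀² T), where C is the normalized Black-Scholes function. In particular this expectation is independent of ρ. -/

import Mathlib

open MeasureTheory Real ProbabilityTheory

/-- The standard normal cumulative distribution function. -/
noncomputable def stdNormalCDF (z : ℝ) : ℝ :=
  ∫ u in Set.Iic z, (Real.sqrt (2 * Real.pi))⁻¹ * Real.exp (-u ^ 2 / 2)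

/-- The normalized Black-Scholes function `C(x,w) = e^x N(d₁) - N(d₂)`. -/
noncomputable def bsC (x w : ℝ) : ℝ :=
  Real.exp x * stdNormalCDF (x / Real.sqrt w + Real.sqrt w / 2)
    - stdNormalCDF (x / Real.sqrt w + Real.sqrt w / 2 - Real.sqrt w)

noncomputable def phiN (u : ℝ) : ℝ := (Real.sqrt (2 * Real.pi))⁻¹ * Real.exp (-u ^ 2 / 2)

noncomputable def gpdf (t b : ℝ) : ℝ := (Real.sqrt (2 * Real.pi * t))⁻¹ * Real.exp (-b ^ 2 / (2 * t))

lemma phiN_nonneg (u : ℝ) : 0 ≤ phiN u := by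
  unfold phiN; positivity

lemma gpdf_nonneg (t b : ℝ) : 0 ≤ gpdf t b := by
  unfold gpdf; positivity

lemma exp_sq_rw (a b : ℝ) (ha : a ≠ 0) : Real.exp (-b ^ 2 / (2 * a)) = Real.exp (-(1/(2*a)) * b ^ 2) := by
  congr 1; field_simp

lemma integrable_gpdf {t : ℝ} (ht : 0 < t) : Integrable (gpdf t) := by
  unfold gpdf
  have : Integrable (fun b : ℝ => Real.exp (-(1/(2*t)) * b ^ 2)) :=
    integrable_exp_neg_mul_sq (by positivity)
  refine (this.const_mul ((Real.sqrt (2 * Real.pi * t))⁻¹)).congr ?_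
  filter_upwards with b
  rw [exp_sq_rw t b ht.ne']

lemma integral_gpdf {t : ℝ} (ht : 0 < t) : ∫ b, gpdf t b = 1 := by
  unfold gpdf
  have h1 : ∀ b : ℝ, Real.exp (-b ^ 2 / (2 * t)) = Real.exp (-(1/(2*t)) * b ^ 2) :=
    fun b => exp_sq_rw t b ht.ne'
  simp_rw [h1, integral_const_mul, integral_gaussian]
  rw [show π / (1/(2*t)) = 2 * π * t by field_simp]
  rw [inv_mul_cancel₀]
  positivity

lemma integrable_phiN : Integrable phiN := by
  have := integrable_gpdf one_pos
  unfold gpdf at this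
  unfold phiN
  simpa using this

lemma integral_phiN : ∫ u, phiN u = 1 := by
  have := integral_gpdf one_pos
  unfold gpdf at this
  unfold phiN
  simpa using this

lemma stdNormalCDF_eq (z : ℝ) : stdNormalCDF z = ∫ u in Set.Iic z, phiN u := rfl

lemma stdNormalCDF_nonneg (z : ℝ) : 0 ≤ stdNormalCDF z :=
  setIntegral_nonneg measurableSet_Iic fun u _ => phiN_nonneg u

lemma stdNormalCDF_le_one (z : ℝ) : stdNormalCDF z ≤ 1 := by
  rw [stdNormalCDF_eq, ← integral_phiN]
  exact setIntegral_le_integral integrable_phiN (by filter_upwards with u using phiN_nonneg u)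

lemma stdNormalCDF_mono : Monotone stdNormalCDF := by
  intro a b hab
  rw [stdNormalCDF_eq, stdNormalCDF_eq]
  exact setIntegral_mono_set integrable_phiN.integrableOn
    (by filter_upwards with u using phiN_nonneg u) (HasSubset.Subset.eventuallyLE (Set.Iic_subset_Iic.mpr hab))

lemma measurable_stdNormalCDF : Measurable stdNormalCDF :=
  stdNormalCDF_mono.measurable

lemma stdNormalCDF_shift (p a : ℝ) :
    stdNormalCDF (p + a) = ∫ v in Set.Iic p, phiN (v + a) := by
  rw [stdNormalCDF_eq, ← integral_indicator measurableSet_Iic,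
    ← integral_indicator measurableSet_Iic,
    ← integral_add_right_eq_self (fun v => Set.indicator (Set.Iic (p + a)) phiN v) a]
  congr 1
  ext v
  simp only [Set.indicator_apply, Set.mem_Iic, add_le_add_iff_right]

lemma gauss_conv {t : ℝ} (ht : 0 < t) (q v : ℝ) :
    ∫ b, phiN (v + q * b) * gpdf t b
      = (Real.sqrt (2 * Real.pi * (1 + q ^ 2 * t)))⁻¹
          * Real.exp (-v ^ 2 / (2 * (1 + q ^ 2 * t))) := by
  set s : ℝ := 1 + q ^ 2 * t with hs
  have hs0 : 0 < s := by positivity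
  have hexp : ∀ b : ℝ, -(v + q * b) ^ 2 / 2 + -b ^ 2 / (2 * t)
      = -v ^ 2 / (2 * s) + (-(s / (2 * t)) * (b + q * t * v / s) ^ 2) := by
    intro b
    field_simp
    ring
  have key : ∀ b : ℝ, phiN (v + q * b) * gpdf t b
      = ((Real.sqrt (2 * Real.pi))⁻¹ * (Real.sqrt (2 * Real.pi * t))⁻¹
          * Real.exp (-v ^ 2 / (2 * s)))
          * Real.exp (-(s / (2 * t)) * (b + q * t * v / s) ^ 2) := by
    intro b
    unfold phiN gpdf
    rw [mul_mul_mul_comm, ← Real.exp_add, hexp b, Real.exp_add]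
    ring
  simp_rw [key]
  rw [integral_const_mul,
    integral_add_right_eq_self (fun b => Real.exp (-(s / (2 * t)) * b ^ 2)) (q * t * v / s),
    integral_gaussian]
  have h1 : Real.sqrt (π / (s / (2 * t))) = Real.sqrt (2 * Real.pi * t) / Real.sqrt s := by
    rw [show π / (s / (2 * t)) = (2 * Real.pi * t) / s by field_simp,
      Real.sqrt_div (by positivity)]
  rw [h1, show Real.sqrt (2 * Real.pi * s) = Real.sqrt (2 * Real.pi) * Real.sqrt s by
      rw [← Real.sqrt_mul (by positivity)]]
  have h2 : Real.sqrt (2 * Real.pi) ≠ 0 := by positivity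
  have h3 : Real.sqrt (2 * Real.pi * t) ≠ 0 := by positivity
  have h4 : Real.sqrt s ≠ 0 := by positivity
  field_simp

lemma cdf_scale {s : ℝ} (hs : 0 < s) (p : ℝ) :
    ∫ v in Set.Iic p, (Real.sqrt (2 * Real.pi * s))⁻¹ * Real.exp (-v ^ 2 / (2 * s))
      = stdNormalCDF (p / Real.sqrt s) := by
  have hss : 0 < Real.sqrt s := Real.sqrt_pos.mpr hs
  set F : ℝ → ℝ := Set.indicator (Set.Iic p)
    (fun v => (Real.sqrt (2 * Real.pi * s))⁻¹ * Real.exp (-v ^ 2 / (2 * s))) with hF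
  have hmap := MeasureTheory.Measure.integral_comp_mul_left F (Real.sqrt s)
  rw [abs_of_pos (inv_pos.mpr hss), smul_eq_mul] at hmap
  rw [← integral_indicator measurableSet_Iic, ← hF]
  have : ∫ v, F v = Real.sqrt s * ∫ x, F (Real.sqrt s * x) := by
    rw [hmap]; field_simp
  rw [this, stdNormalCDF_eq, ← integral_indicator measurableSet_Iic, ← integral_const_mul]
  congr 1
  ext x
  rw [hF]
  simp only [Set.indicator_apply, Set.mem_Iic]
  have hiff : Real.sqrt s * x ≤ p ↔ x ≤ p / Real.sqrt s := by
    rw [le_div_iff₀ hss]; constructor <;> intro h <;> linarith [h]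
  by_cases h : x ≤ p / Real.sqrt s
  · rw [if_pos h, if_pos (hiff.mpr h)]
    have harg : -(Real.sqrt s * x) ^ 2 / (2 * s) = -x ^ 2 / 2 := by
      rw [mul_pow, Real.sq_sqrt hs.le]; field_simp
    rw [harg]
    unfold phiN
    rw [show Real.sqrt (2 * Real.pi * s) = Real.sqrt (2 * Real.pi) * Real.sqrt s by
      rw [← Real.sqrt_mul (by positivity)]]
    field_simp
  · rw [if_neg h, if_neg (fun hc => h (hiff.mp hc)), mul_zero]

lemma continuous_phiN : Continuous phiN := by
  unfold phiN; continuity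

lemma continuous_gpdf (t : ℝ) : Continuous (gpdf t) := by
  unfold gpdf; continuity

lemma integral_phiN_shift (a : ℝ) : ∫ v, phiN (v + a) = 1 := by
  rw [integral_add_right_eq_self phiN a, integral_phiN]

lemma smooth {t : ℝ} (ht : 0 < t) (p q : ℝ) :
    ∫ b, stdNormalCDF (p + q * b) * gpdf t b
      = stdNormalCDF (p / Real.sqrt (1 + q ^ 2 * t)) := by
  set s : ℝ := 1 + q ^ 2 * t with hs
  have hs0 : 0 < s := by positivity
  have hmeas : AEStronglyMeasurable
      (fun z : ℝ × ℝ => phiN (z.2 + q * z.1) * gpdf t z.1)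
      ((volume : Measure ℝ).prod (volume : Measure ℝ)) := by
    apply Continuous.aestronglyMeasurable
    exact (continuous_phiN.comp (continuous_snd.add (continuous_const.mul continuous_fst))).mul
      ((continuous_gpdf t).comp continuous_fst)
  have hG : Integrable (fun z : ℝ × ℝ => phiN (z.2 + q * z.1) * gpdf t z.1)
      ((volume : Measure ℝ).prod (volume : Measure ℝ)) := by
    rw [integrable_prod_iff hmeas]
    constructor
    · filter_upwards with b
      exact (integrable_phiN.comp_add_right (q * b)).mul_const _
    · apply (integrable_gpdf ht).congr
      filter_upwards with b
      have : ∀ v : ℝ, ‖phiN (v + q * b) * gpdf t b‖ = phiN (v + q * b) * gpdf t b := by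
        intro v
        rw [Real.norm_eq_abs, abs_of_nonneg (mul_nonneg (phiN_nonneg _) (gpdf_nonneg _ _))]
      simp_rw [this, integral_mul_const, integral_phiN_shift, one_mul]
  have hGr : Integrable (fun z : ℝ × ℝ => phiN (z.2 + q * z.1) * gpdf t z.1)
      ((volume : Measure ℝ).prod ((volume : Measure ℝ).restrict (Set.Iic p))) := by
    have hprod : (volume : Measure ℝ).prod ((volume : Measure ℝ).restrict (Set.Iic p))
        = ((volume : Measure ℝ).prod (volume : Measure ℝ)).restrict (Set.univ ×ˢ Set.Iic p) := by
      rw [← Measure.prod_restrict, Measure.restrict_univ]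
    rw [hprod]
    exact hG.restrict
  have hre : ∀ b : ℝ, stdNormalCDF (p + q * b) * gpdf t b
      = ∫ v in Set.Iic p, phiN (v + q * b) * gpdf t b := by
    intro b
    rw [stdNormalCDF_shift, ← integral_mul_const]
  simp_rw [hre]
  rw [integral_integral_swap hGr]
  have hinner : ∀ v : ℝ, (∫ b, phiN (v + q * b) * gpdf t b)
      = (Real.sqrt (2 * Real.pi * s))⁻¹ * Real.exp (-v ^ 2 / (2 * s)) := by
    intro v; exact gauss_conv ht q v
  simp_rw [hinner]
  exact cdf_scale hs0 p

lemma tilt_pt {t : ℝ} (ht : 0 < t) (c b : ℝ) :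
    Real.exp (c * b) * gpdf t b = Real.exp (c ^ 2 * t / 2) * gpdf t (b - c * t) := by
  unfold gpdf
  have h : c * b + -b ^ 2 / (2 * t) = c ^ 2 * t / 2 + -(b - c * t) ^ 2 / (2 * t) := by
    field_simp; ring
  calc Real.exp (c * b) * ((Real.sqrt (2 * Real.pi * t))⁻¹ * Real.exp (-b ^ 2 / (2 * t)))
      = (Real.sqrt (2 * Real.pi * t))⁻¹ * Real.exp (c * b + -b ^ 2 / (2 * t)) := by
        rw [Real.exp_add]; ring
    _ = (Real.sqrt (2 * Real.pi * t))⁻¹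
        * Real.exp (c ^ 2 * t / 2 + -(b - c * t) ^ 2 / (2 * t)) := by rw [h]
    _ = _ := by rw [Real.exp_add]; ring

lemma tilt {t : ℝ} (ht : 0 < t) (c p q : ℝ) :
    ∫ b, Real.exp (c * b) * stdNormalCDF (p + q * b) * gpdf t b
      = Real.exp (c ^ 2 * t / 2)
          * ∫ b, stdNormalCDF (p + q * c * t + q * b) * gpdf t b := by
  have hpt : ∀ b : ℝ, Real.exp (c * b) * stdNormalCDF (p + q * b) * gpdf t b
      = Real.exp (c ^ 2 * t / 2) * (stdNormalCDF (p + q * b) * gpdf t (b - c * t)) := by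
    intro b
    rw [show Real.exp (c * b) * stdNormalCDF (p + q * b) * gpdf t b
        = stdNormalCDF (p + q * b) * (Real.exp (c * b) * gpdf t b) by ring, tilt_pt ht c b]
    ring
  simp_rw [hpt]
  rw [integral_const_mul]
  congr 1
  rw [← integral_add_right_eq_self
    (fun b => stdNormalCDF (p + q * b) * gpdf t (b - c * t)) (c * t)]
  congr 1
  ext b
  rw [add_sub_cancel_right, show p + q * (b + c * t) = p + q * c * t + q * b by ring]

lemma integral_gaussianReal_eq {T : ℝ} (hT : 0 < T) (f : ℝ → ℝ) :
    ∫ b, f b ∂(gaussianReal 0 (Real.toNNReal T)) = ∫ b, f b * gpdf T b := by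
  have hv : Real.toNNReal T ≠ 0 := by
    simp only [ne_eq, Real.toNNReal_eq_zero, not_le]; exact hT
  rw [gaussianReal_of_var_ne_zero 0 hv]
  have hd : (gaussianPDF 0 (Real.toNNReal T))
      = fun x => ((Real.toNNReal (gaussianPDFReal 0 (Real.toNNReal T) x) : NNReal) : ENNReal) := by
    ext x; rfl
  have hmeas : Measurable fun x => Real.toNNReal (gaussianPDFReal 0 (Real.toNNReal T) x) :=
    (measurable_gaussianPDFReal 0 (Real.toNNReal T)).real_toNNReal
  rw [hd, integral_withDensity_eq_integral_smul hmeas f]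
  congr 1
  ext b
  rw [NNReal.smul_def, smul_eq_mul, Real.coe_toNNReal _ (gaussianPDFReal_nonneg _ _ _)]
  rw [ProbabilityTheory.gaussianPDFReal]
  unfold gpdf
  rw [Real.coe_toNNReal T hT.le, sub_zero]
  ring

/-- Zeroth order term of the small vol-of-vol expansion: for `B ~ N(0, T)`,
`E[C(X₀ + ρY₀B - (ρ²/2)Y₀²T, (1-ρ²)Y₀²T)] = C(X₀, Y₀²T)`; in particular the
expectation is independent of `ρ`. -/
theorem zeroth_order_expansion (T Y₀ ρ X₀ : ℝ) (hT : 0 < T) (hY₀ : 0 < Y₀)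
    (hρ : ρ ∈ Set.Ioo (-1 : ℝ) 1) :
    ∫ b, bsC (X₀ + ρ * Y₀ * b - ρ ^ 2 / 2 * Y₀ ^ 2 * T) ((1 - ρ ^ 2) * Y₀ ^ 2 * T)
        ∂(gaussianReal 0 (Real.toNNReal T))
      = bsC X₀ (Y₀ ^ 2 * T) := by
  obtain ⟨hρ1, hρ2⟩ := hρ
  have hρsq : ρ ^ 2 < 1 := by nlinarith
  set σ : ℝ := Y₀ * Real.sqrt T with hσdef
  have hσ : 0 < σ := by positivity
  have hsT : Real.sqrt T ^ 2 = T := Real.sq_sqrt hT.le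
  have hσ2 : σ ^ 2 = Y₀ ^ 2 * T := by
    rw [hσdef, mul_pow, Real.sq_sqrt hT.le]
  set r : ℝ := Real.sqrt (1 - ρ ^ 2) with hrdef
  have hr : 0 < r := Real.sqrt_pos.mpr (by linarith)
  have hr2 : r ^ 2 = 1 - ρ ^ 2 := Real.sq_sqrt (by linarith)
  have hsw : Real.sqrt ((1 - ρ ^ 2) * Y₀ ^ 2 * T) = r * σ := by
    rw [show (1 - ρ ^ 2) * Y₀ ^ 2 * T = (r * σ) ^ 2 by rw [mul_pow, hr2, hσ2]; ring,
      Real.sqrt_sq (by positivity)]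
  have hsY : Real.sqrt (Y₀ ^ 2 * T) = σ := by rw [← hσ2, Real.sqrt_sq hσ.le]
  set q : ℝ := ρ * Y₀ / (r * σ) with hqdef
  set c : ℝ := ρ * Y₀ with hcdef
  set p₁ : ℝ := (X₀ - ρ ^ 2 / 2 * Y₀ ^ 2 * T) / (r * σ) + r * σ / 2 with hp₁def
  set p₂ : ℝ := p₁ - r * σ with hp₂def
  set K : ℝ := Real.exp (X₀ - ρ ^ 2 / 2 * Y₀ ^ 2 * T) with hKdef
  have hrσ : r * σ ≠ 0 := by positivity
  -- rewrite the integrand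
  have hbsC : ∀ b : ℝ,
      bsC (X₀ + ρ * Y₀ * b - ρ ^ 2 / 2 * Y₀ ^ 2 * T) ((1 - ρ ^ 2) * Y₀ ^ 2 * T)
        = K * Real.exp (c * b) * stdNormalCDF (p₁ + q * b)
            - stdNormalCDF (p₂ + q * b) := by
    intro b
    rw [bsC, hsw]
    have harg : (X₀ + ρ * Y₀ * b - ρ ^ 2 / 2 * Y₀ ^ 2 * T) / (r * σ) + r * σ / 2
        = p₁ + q * b := by
      rw [hp₁def, hqdef]; field_simp; ring
    rw [harg, hKdef, ← Real.exp_add]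
    congr 2
    · rw [hcdef]; ring
    · rw [hp₂def]; ring
  rw [integral_gaussianReal_eq hT]
  simp_rw [← hcdef] at hbsC
  simp_rw [hbsC, sub_mul]
  -- integrability
  have hmeas1 : AEStronglyMeasurable
      (fun b => K * Real.exp (c * b) * stdNormalCDF (p₁ + q * b) * gpdf T b)
      (volume : Measure ℝ) := by
    apply Measurable.aestronglyMeasurable
    exact (((measurable_const.mul (Real.measurable_exp.comp (measurable_const.mul
      measurable_id))).mul (measurable_stdNormalCDF.comp (measurable_const.add
      (measurable_const.mul measurable_id)))).mul ((continuous_gpdf T).measurable))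
  have hmeas2 : AEStronglyMeasurable
      (fun b => stdNormalCDF (p₂ + q * b) * gpdf T b) (volume : Measure ℝ) := by
    apply Measurable.aestronglyMeasurable
    exact ((measurable_stdNormalCDF.comp (measurable_const.add
      (measurable_const.mul measurable_id))).mul ((continuous_gpdf T).measurable))
  have hK0 : 0 ≤ K := Real.exp_nonneg _
  have hint1 : Integrable
      (fun b => K * Real.exp (c * b) * stdNormalCDF (p₁ + q * b) * gpdf T b)
      (volume : Measure ℝ) := by
    have hg : Integrable (fun b => K * Real.exp (c ^ 2 * T / 2) * gpdf T (b - c * T)) := by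
      exact ((integrable_gpdf hT).comp_sub_right (c * T)).const_mul _
    apply hg.mono' hmeas1
    filter_upwards with b
    rw [Real.norm_eq_abs, abs_of_nonneg (by
      have := stdNormalCDF_nonneg (p₁ + q * b); have := gpdf_nonneg T b; positivity)]
    have h1 : K * Real.exp (c * b) * stdNormalCDF (p₁ + q * b) * gpdf T b
        ≤ K * Real.exp (c * b) * 1 * gpdf T b := by
      apply mul_le_mul_of_nonneg_right _ (gpdf_nonneg T b)
      apply mul_le_mul_of_nonneg_left (stdNormalCDF_le_one _) (by positivity)
    calc K * Real.exp (c * b) * stdNormalCDF (p₁ + q * b) * gpdf T b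
        ≤ K * Real.exp (c * b) * 1 * gpdf T b := h1
      _ = K * (Real.exp (c * b) * gpdf T b) := by ring
      _ = K * Real.exp (c ^ 2 * T / 2) * gpdf T (b - c * T) := by
          rw [tilt_pt hT c b]; ring
  have hint2 : Integrable (fun b => stdNormalCDF (p₂ + q * b) * gpdf T b)
      (volume : Measure ℝ) := by
    apply (integrable_gpdf hT).mono' hmeas2
    filter_upwards with b
    rw [Real.norm_eq_abs, abs_of_nonneg
      (mul_nonneg (stdNormalCDF_nonneg _) (gpdf_nonneg _ _))]
    calc stdNormalCDF (p₂ + q * b) * gpdf T b ≤ 1 * gpdf T b :=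
        mul_le_mul_of_nonneg_right (stdNormalCDF_le_one _) (gpdf_nonneg _ _)
      _ = gpdf T b := one_mul _
  rw [integral_sub hint1 hint2]
  -- compute each term
  have hrinv : Real.sqrt (1 + q ^ 2 * T) = r⁻¹ := by
    have h1q : 1 + q ^ 2 * T = (r⁻¹) ^ 2 := by
      rw [hqdef, hcdef]
      field_simp
      linear_combination (-(r ^ 2 * ρ ^ 2)) * hσ2 + (σ ^ 2 * r ^ 2) * hr2
        + (-(Y₀ ^ 2 * (r ^ 2 - 1) * Real.sqrt T ^ 2)) * hr2 + (Y₀ ^ 2 * (r ^ 2 - 1) * ρ ^ 2) * hsT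
    rw [h1q, Real.sqrt_sq (inv_nonneg.mpr hr.le)]
  have hterm2 : ∫ b, stdNormalCDF (p₂ + q * b) * gpdf T b
      = stdNormalCDF (X₀ / σ - σ / 2) := by
    rw [smooth hT p₂ q, hrinv]
    congr 1
    rw [hp₂def, hp₁def]
    field_simp
    linear_combination (-(4 * Y₀ ^ 3 * r * Real.sqrt T * Real.sqrt T ^ 2)) * hr2
      + (4 * Y₀ ^ 3 * r * Real.sqrt T * ρ ^ 2) * hsT
      + ((Y₀ ^ 2 - 4 * Y₀ ^ 3 * r * Real.sqrt T) * ρ ^ 2) * hsT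
      + (-((Y₀ ^ 2 - 4 * Y₀ ^ 3 * r * Real.sqrt T) * Real.sqrt T ^ 2)) * hr2
  have hterm1 : ∫ b, K * Real.exp (c * b) * stdNormalCDF (p₁ + q * b) * gpdf T b
      = Real.exp X₀ * stdNormalCDF (X₀ / σ + σ / 2) := by
    have hre : ∀ b : ℝ, K * Real.exp (c * b) * stdNormalCDF (p₁ + q * b) * gpdf T b
        = K * (Real.exp (c * b) * stdNormalCDF (p₁ + q * b) * gpdf T b) := by
      intro b; ring
    simp_rw [hre]
    rw [integral_const_mul, tilt hT c p₁ q, smooth hT (p₁ + q * c * T) q, hrinv]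
    rw [← mul_assoc, hKdef, ← Real.exp_add]
    congr 2
    · rw [hcdef]; ring
    · rw [hp₁def, hqdef, hcdef]
      field_simp
      linear_combination (4 * Y₀ ^ 4 * r ^ 2 * Real.sqrt T ^ 4) * hr2
        + (-(4 * Y₀ ^ 4 * r ^ 2 * ρ ^ 2 * Real.sqrt T ^ 2)) * hsT
        + ((Y₀ ^ 2 - 4 * Y₀ ^ 4 * r ^ 2 * Real.sqrt T ^ 2) * Real.sqrt T ^ 2) * hr2
        + (-((Y₀ ^ 2 - 4 * Y₀ ^ 4 * r ^ 2 * Real.sqrt T ^ 2) * ρ ^ 2)) * hsT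
  rw [hterm1, hterm2, bsC, hsY, show X₀ / σ + σ / 2 - σ = X₀ / σ - σ / 2 by ring]
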